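/- In Spingarn's splitting method with η > 0: η b_k + x_k = z_{k-1} + η w_{k-1}, b_k ∈ B(x_k); η a_k + y_k = z_{k-1} - η w_{k-1}, a_k ∈ A(y_k); z_k = (1-ρ_k)z_{k-1} + (ρ_k/2)(x_k + y_k); w_k = (1-ρ_k)w_{k-1} + (ρ_k/2)(b_k - a_k), with ρ_k ∈ [1-ρ̄, 1+ρ̄], ρ̄ ∈ [0,1), for each k there exists 1 ≤ i ≤ k such that ‖a_i + b_i‖ ≤ 2d₀/(η√k(1-ρ̄)) and ‖x_i - y_i‖ ≤ 2d₀/(√k(1-ρ̄)), where d₀ = dist((z_0, ηw_0), S_e(ηA, ηB)). -/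
import Mathlib


open RealInnerProductSpace Finset

abbrev Euc (n : ℕ) := EuclideanSpace ℝ (Fin n)

/-- The ε-enlargement `T^ε` of a point-to-set operator `T`. -/
def enl {n : ℕ} (T : Euc n → Set (Euc n)) (ε : ℝ) (z : Euc n) : Set (Euc n) :=
  {v | ∀ z' v', v' ∈ T z' → ⟪z' - z, v' - v⟫ ≥ -ε}

/-- Monotonicity of a point-to-set operator. -/
def Mono {n : ℕ} (T : Euc n → Set (Euc n)) : Prop :=
  ∀ z v z' v', v ∈ T z → v' ∈ T z' → ⟪z - z', v - v'⟫ ≥ 0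

/-- Maximal monotonicity of a point-to-set operator. -/
def MaxMono {n : ℕ} (T : Euc n → Set (Euc n)) : Prop :=
  Mono T ∧ ∀ S : Euc n → Set (Euc n), Mono S → (∀ z, T z ⊆ S z) → ∀ z, S z = T z

/-- The extended solution set `S_e(A,B)`. -/
def Se {n : ℕ} (A B : Euc n → Set (Euc n)) : Set (Euc n × Euc n) :=
  {p | p.2 ∈ B p.1 ∧ -p.2 ∈ A p.1}

lemma inner_identity {n : ℕ} (z' ω α β zs ωs x y : Euc n)
    (hx : x = z' + ω - β) (hy : y = z' - ω - α) :
    ⟪z' - zs, α + β⟫ + ⟪ω - ωs, x - y⟫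
      = (‖α + β‖^2 + ‖x - y‖^2)/2 + ⟪x - zs, β - ωs⟫ + ⟪y - zs, α + ωs⟫ := by
  subst hx hy
  simp only [← real_inner_self_eq_norm_sq]
  simp only [inner_add_left, inner_add_right, inner_sub_left, inner_sub_right]
  linarith [real_inner_comm z' ω, real_inner_comm z' α, real_inner_comm z' β,
    real_inner_comm z' zs, real_inner_comm z' ωs, real_inner_comm ω α,
    real_inner_comm ω β, real_inner_comm ω zs, real_inner_comm ω ωs,
    real_inner_comm α β, real_inner_comm α zs, real_inner_comm α ωs,
    real_inner_comm β zs, real_inner_comm β ωs, real_inner_comm zs ωs]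

lemma norm_sub_smul_sq {n : ℕ} (u p : Euc n) (c : ℝ) :
    ‖u - c • p‖^2 = ‖u‖^2 - 2*c*⟪u, p⟫ + c^2 * ‖p‖^2 := by
  rw [norm_sub_sq_real, real_inner_smul_right, norm_smul]
  simp [mul_pow, sq_abs]
  ring

lemma fejer_step {n : ℕ} (z' ω α β zs ωs x y zn ωn : Euc n) (ρ : ℝ) (hρ : 0 ≤ ρ)
    (h1 : ⟪x - zs, β - ωs⟫ ≥ 0) (h2 : ⟪y - zs, α + ωs⟫ ≥ 0)
    (hx : x = z' + ω - β) (hy : y = z' - ω - α)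
    (hzn : zn = z' - (ρ/2) • (α + β)) (hωn : ωn = ω - (ρ/2) • (x - y)) :
    ‖zn - zs‖^2 + ‖ωn - ωs‖^2 ≤
      ‖z' - zs‖^2 + ‖ω - ωs‖^2 - (ρ*(2-ρ)/4) * (‖α + β‖^2 + ‖x - y‖^2) := by
  have hzn' : zn - zs = (z' - zs) - (ρ/2) • (α + β) := by rw [hzn]; abel
  have hωn' : ωn - ωs = (ω - ωs) - (ρ/2) • (x - y) := by rw [hωn]; abel
  have e1 := norm_sub_smul_sq (z' - zs) (α + β) (ρ/2)
  have e2 := norm_sub_smul_sq (ω - ωs) (x - y) (ρ/2)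
  have eD := inner_identity z' ω α β zs ωs x y hx hy
  have eD2 : ρ * (⟪z' - zs, α + β⟫ + ⟪ω - ωs, x - y⟫)
      = ρ * ((‖α + β‖^2 + ‖x - y‖^2)/2 + ⟪x - zs, β - ωs⟫ + ⟪y - zs, α + ωs⟫) := by
    rw [eD]
  rw [hzn', hωn', e1, e2]
  nlinarith [mul_nonneg hρ h1, mul_nonneg hρ h2]

set_option maxHeartbeats 1000000 in
theorem spingarn_pointwise_complexity {n : ℕ} (A B : Euc n → Set (Euc n))
    (hA : MaxMono A) (hB : MaxMono B) (hSe : (Se A B).Nonempty)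
    (η : ℝ) (hη : 0 < η)
    (x y a b z w : ℕ → Euc n) (ρ : ℕ → ℝ) (ρbar d₀ : ℝ)
    (hρbar : ρbar ∈ Set.Ico (0 : ℝ) 1)
    (hρ : ∀ k, 1 ≤ k → ρ k ∈ Set.Icc (1 - ρbar) (1 + ρbar))
    (hbB : ∀ k, 1 ≤ k → b k ∈ B (x k)) (haA : ∀ k, 1 ≤ k → a k ∈ A (y k))
    (hxb : ∀ k, 1 ≤ k → η • b k + x k = z (k - 1) + η • w (k - 1))
    (hya : ∀ k, 1 ≤ k → η • a k + y k = z (k - 1) - η • w (k - 1))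
    (hz : ∀ k, 1 ≤ k → z k = (1 - ρ k) • z (k - 1) + (ρ k / 2) • (x k + y k))
    (hw : ∀ k, 1 ≤ k → w k = (1 - ρ k) • w (k - 1) + (ρ k / 2) • (b k - a k))
    (hnt : ∀ k, 1 ≤ k → ¬(a k + b k = 0 ∧ x k - y k = 0))
    (hd₀ : d₀ = sInf {r : ℝ | ∃ p ∈ Se A B,
      r = Real.sqrt (‖z 0 - p.1‖ ^ 2 + ‖η • w 0 - η • p.2‖ ^ 2)}) :
    ∀ k : ℕ, 1 ≤ k →
      ∃ i : ℕ, 1 ≤ i ∧ i ≤ k ∧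
        ‖a i + b i‖ ≤ 2 * d₀ / (η * Real.sqrt k * (1 - ρbar)) ∧
        ‖x i - y i‖ ≤ 2 * d₀ / (Real.sqrt k * (1 - ρbar)) := by
  intro k hk
  obtain ⟨hρbar0, hρbar1⟩ := hρbar
  set S : ℕ → ℝ := fun j => ‖η • a j + η • b j‖^2 + ‖x j - y j‖^2 with hSdef
  have hSnn : ∀ j, 0 ≤ S j := fun j => by positivity
  -- one-step Fejér inequality, for any solution p
  have step : ∀ p ∈ Se A B, ∀ j : ℕ, 1 ≤ j →
      ‖z j - p.1‖^2 + ‖η • w j - η • p.2‖^2 ≤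
        ‖z (j-1) - p.1‖^2 + ‖η • w (j-1) - η • p.2‖^2 - ((1-ρbar)^2/4) * S j := by
    intro p hp j hj
    have hρj := hρ j hj
    have hρ0 : 0 ≤ ρ j := by have := hρj.1; linarith
    have hx' : x j = z (j-1) + η • w (j-1) - η • b j := by rw [← hxb j hj]; abel
    have hy' : y j = z (j-1) - η • w (j-1) - η • a j := by rw [← hya j hj]; abel
    have h1 : ⟪x j - p.1, η • b j - η • p.2⟫ ≥ 0 := by
      have := hB.1 (x j) (b j) p.1 p.2 (hbB j hj) hp.1
      rw [← smul_sub, real_inner_smul_right]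
      exact mul_nonneg hη.le this
    have h2 : ⟪y j - p.1, η • a j + η • p.2⟫ ≥ 0 := by
      have hm := hA.1 (y j) (a j) p.1 (-p.2) (haA j hj) hp.2
      have : ⟪y j - p.1, a j + p.2⟫ ≥ 0 := by
        have : a j - -p.2 = a j + p.2 := by abel
        rwa [this] at hm
      rw [← smul_add, real_inner_smul_right]
      exact mul_nonneg hη.le this
    have hzn : z j = z (j-1) - (ρ j/2) • (η • a j + η • b j) := by
      rw [hz j hj, hx', hy']; module
    have hωn : η • w j = η • w (j-1) - (ρ j/2) • (x j - y j) := by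
      rw [hw j hj, hx', hy']; module
    have F := fejer_step (z (j-1)) (η • w (j-1)) (η • a j) (η • b j) p.1 (η • p.2)
      (x j) (y j) (z j) (η • w j) (ρ j) hρ0 h1 h2 hx' hy' hzn hωn
    have h5 : (1-ρbar)^2 ≤ ρ j * (2 - ρ j) := by nlinarith [hρj.1, hρj.2]
    have h6 := hSnn j
    nlinarith [mul_le_mul_of_nonneg_right h5 h6]
  -- summed inequality
  have sum_le : ∀ p ∈ Se A B, ∀ m : ℕ,
      ‖z m - p.1‖^2 + ‖η • w m - η • p.2‖^2 + ((1-ρbar)^2/4) * ∑ i ∈ Finset.Icc 1 m, S i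
        ≤ ‖z 0 - p.1‖^2 + ‖η • w 0 - η • p.2‖^2 := by
    intro p hp m
    induction m with
    | zero => simp
    | succ m ih =>
      have hstep := step p hp (m+1) (Nat.le_add_left 1 m)
      simp only [Nat.add_sub_cancel] at hstep
      rw [Finset.sum_Icc_succ_top (Nat.le_add_left 1 m)]
      linarith
  -- pick the minimizing index
  obtain ⟨i, hiIcc, hmin⟩ := Finset.exists_min_image (Finset.Icc 1 k) S
    ⟨1, by simp [hk]⟩
  rw [Finset.mem_Icc] at hiIcc
  have hkSi : ∀ p ∈ Se A B, ((1-ρbar)^2/4) * ((k:ℝ) * S i)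
      ≤ ‖z 0 - p.1‖^2 + ‖η • w 0 - η • p.2‖^2 := by
    intro p hp
    have hcard := Finset.card_nsmul_le_sum (Finset.Icc 1 k) S (S i) hmin
    simp only [Nat.card_Icc, Nat.add_sub_cancel, nsmul_eq_mul] at hcard
    have := sum_le p hp k
    have hφ : 0 ≤ ‖z k - p.1‖^2 + ‖η • w k - η • p.2‖^2 := by positivity
    have hc : 0 ≤ ((1:ℝ)-ρbar)^2/4 := by positivity
    nlinarith [mul_le_mul_of_nonneg_left hcard hc]
  set s := Real.sqrt (S i) with hs
  set K := Real.sqrt k with hK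
  have hKpos : 0 < K := Real.sqrt_pos.mpr (by exact_mod_cast hk)
  have hεpos : 0 < 1 - ρbar := by linarith
  have hs2 : s^2 = S i := Real.sq_sqrt (hSnn i)
  have hK2 : K^2 = (k:ℝ) := Real.sq_sqrt (Nat.cast_nonneg k)
  have hsnn : 0 ≤ s := Real.sqrt_nonneg _
  -- key distance bound
  have hkey : s * K * (1 - ρbar) / 2 ≤ d₀ := by
    rw [hd₀]
    apply le_csInf
    · obtain ⟨p, hp⟩ := hSe
      exact ⟨Real.sqrt (‖z 0 - p.1‖ ^ 2 + ‖η • w 0 - η • p.2‖ ^ 2), p, hp, rfl⟩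
    · rintro r ⟨p, hp, rfl⟩
      have hφnn : (0:ℝ) ≤ ‖z 0 - p.1‖ ^ 2 + ‖η • w 0 - η • p.2‖ ^ 2 := by positivity
      rw [Real.le_sqrt (by positivity) hφnn]
      have := hkSi p hp
      calc (s * K * (1 - ρbar) / 2)^2 = ((1-ρbar)^2/4) * ((k:ℝ) * S i) := by
            rw [← hs2, ← hK2]; ring
        _ ≤ _ := this
  -- individual bounds via s
  have hab : η * ‖a i + b i‖ ≤ s := by
    have h7 : ‖η • a i + η • b i‖ ≤ s := by
      rw [hs, show ‖η • a i + η • b i‖ = Real.sqrt (‖η • a i + η • b i‖^2) by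
        rw [Real.sqrt_sq (norm_nonneg _)]]
      exact Real.sqrt_le_sqrt (by simp only [hSdef]; nlinarith [sq_nonneg ‖x i - y i‖])
    rwa [← smul_add, norm_smul, Real.norm_eq_abs, abs_of_pos hη] at h7
  have hxy : ‖x i - y i‖ ≤ s := by
    rw [hs, show ‖x i - y i‖ = Real.sqrt (‖x i - y i‖^2) by
      rw [Real.sqrt_sq (norm_nonneg _)]]
    exact Real.sqrt_le_sqrt (by simp only [hSdef]; nlinarith [sq_nonneg ‖η • a i + η • b i‖])
  refine ⟨i, hiIcc.1, hiIcc.2, ?_, ?_⟩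
  · rw [le_div_iff₀ (by positivity)]
    have h8 : (0:ℝ) ≤ K * (1 - ρbar) := (mul_pos hKpos hεpos).le
    have := mul_le_mul_of_nonneg_right hab h8
    nlinarith
  · rw [le_div_iff₀ (by positivity)]
    have h8 : (0:ℝ) ≤ K * (1 - ρbar) := (mul_pos hKpos hεpos).le
    have := mul_le_mul_of_nonneg_right hxy h8
    nlinarith
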